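/- Let D and D' be finite persistence diagrams (finite multisets of points in Λ = {(x,y) : y > x > 0}). Then the combinatorial p-Wasserstein distance between D and D' defined via partial matchings (where unmatched points pay the cost of projection to the diagonal) equals the measure-theoretic p-Wasserstein distance between the associated measure persistence diagrams ν_D = ∑ δ_{x_i} and ν_{D'} = ∑ δ_{x'_j} defined via admissible couplings on the augmented space Λ̄ × Λ̄. -/

import Mathlib

open Finset
open scoped Classical

/-- ℓᵖ distance on ℝ², raised to the power `p`. -/
noncomputable def lpp (p : ℝ) (a b : ℝ × ℝ) : ℝ := |a.1 - b.1| ^ p + |a.2 - b.2| ^ p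

/-- Projection of a point of ℝ² onto the diagonal. -/
noncomputable def diagProj (a : ℝ × ℝ) : ℝ × ℝ := ((a.1 + a.2) / 2, (a.1 + a.2) / 2)

/-- Cost (to the power `p`) between augmented persistence-diagram points: the virtual
point `∂_Λ` (encoded by `none`) acts as the diagonal projection of the other point. -/
noncomputable def pdCost {Y Y' : Type*} (p : ℝ) (ι : Y → ℝ × ℝ) (ι' : Y' → ℝ × ℝ) :
    Option Y → Option Y' → ℝ
  | some y, some y' => lpp p (ι y) (ι' y')
  | some y, none => lpp p (ι y) (diagProj (ι y))
  | none, some y' => lpp p (diagProj (ι' y')) (ι' y')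
  | none, none => 0

/-- A partial matching between the index sets of two finite persistence diagrams: each
point appears in at most one matched pair. -/
def IsPartialMatching {N M : ℕ} (S : Finset (Fin N × Fin M)) : Prop :=
  (∀ q ∈ S, ∀ q' ∈ S, q.1 = q'.1 → q = q') ∧ (∀ q ∈ S, ∀ q' ∈ S, q.2 = q'.2 → q = q')

/-- Cost of a partial matching: matched pairs pay the ℓᵖ cost, unmatched points pay the
cost of projecting to the diagonal. -/
noncomputable def matchCost {N M : ℕ} (p : ℝ) (D : Fin N → ℝ × ℝ) (D' : Fin M → ℝ × ℝ)
    (S : Finset (Fin N × Fin M)) : ℝ :=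
  (∑ q ∈ S, lpp p (D q.1) (D' q.2)) +
  (∑ i ∈ Finset.univ.filter (fun i : Fin N => ∀ q ∈ S, q.1 ≠ i),
      lpp p (D i) (diagProj (D i))) +
  (∑ j ∈ Finset.univ.filter (fun j : Fin M => ∀ q ∈ S, q.2 ≠ j),
      lpp p (D' j) (diagProj (D' j)))

/-- The combinatorial `p`-Wasserstein distance between finite persistence diagrams. -/
noncomputable def dPD {N M : ℕ} (p : ℝ) (D : Fin N → ℝ × ℝ) (D' : Fin M → ℝ × ℝ) : ℝ :=
  sInf {r | ∃ S : Finset (Fin N × Fin M), IsPartialMatching S ∧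
    r = (matchCost p D D' S) ^ (1 / p)}

/-- Admissible couplings on the augmented index sets: marginals are the counting measures
and no mass sits at `(∂_Λ, ∂_Λ)`. -/
def IsAdmissible {N M : ℕ} (π : Option (Fin N) → Option (Fin M) → ℝ) : Prop :=
  (∀ a b, 0 ≤ π a b) ∧ (∀ i : Fin N, ∑ b : Option (Fin M), π (some i) b = 1) ∧
    (∀ j : Fin M, ∑ a : Option (Fin N), π a (some j) = 1) ∧ π none none = 0

/-- The measure-theoretic `p`-Wasserstein distance between the associated measure
persistence diagrams `ν_D = ∑ δ_{x_i}`, via admissible couplings on the augmented space. -/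
noncomputable def dMPD {N M : ℕ} (p : ℝ) (D : Fin N → ℝ × ℝ) (D' : Fin M → ℝ × ℝ) : ℝ :=
  sInf {r | ∃ π : Option (Fin N) → Option (Fin M) → ℝ, IsAdmissible π ∧
    r = (∑ a : Option (Fin N), ∑ b : Option (Fin M), pdCost p D D' a b * π a b) ^ (1 / p)}

lemma lpp_comm (p : ℝ) (a b : ℝ × ℝ) : lpp p a b = lpp p b a := by
  unfold lpp; rw [abs_sub_comm a.1, abs_sub_comm a.2]

/-- coupling induced by a matching -/
noncomputable def matchCoupling {N M : ℕ} (S : Finset (Fin N × Fin M)) :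
    Option (Fin N) → Option (Fin M) → ℝ
  | some i, some j => if (i, j) ∈ S then 1 else 0
  | some i, none => if ∀ q ∈ S, q.1 ≠ i then 1 else 0
  | none, some j => if ∀ q ∈ S, q.2 ≠ j then 1 else 0
  | none, none => 0

lemma matchCoupling_admissible {N M : ℕ} {S : Finset (Fin N × Fin M)}
    (hS : IsPartialMatching S) : IsAdmissible (matchCoupling S) := by
  refine ⟨?_, ?_, ?_, rfl⟩
  · rintro (_|i) (_|j) <;> simp [matchCoupling] <;> split <;> norm_num
  · intro i
    rw [Fintype.sum_option]
    show (if ∀ q ∈ S, q.1 ≠ i then (1:ℝ) else 0) + ∑ j, (if (i, j) ∈ S then (1:ℝ) else 0) = 1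
    by_cases h : ∃ q ∈ S, q.1 = i
    · obtain ⟨q, hq, hq1⟩ := h
      have : ∀ j, ((i, j) ∈ S ↔ j = q.2) := by
        intro j
        constructor
        · intro hj
          have := hS.1 _ hj _ hq (by simp [hq1])
          rw [← this]
        · rintro rfl; rw [show (i, q.2) = q by rw [← hq1]]; exact hq
      simp only [this]
      rw [if_neg (by push_neg; exact ⟨q, hq, hq1⟩)]
      simp
    · push_neg at h
      rw [if_pos (fun q hq => h q hq)]
      have : ∀ j, ((i, j) ∈ S ↔ False) := fun j => iff_false_intro (fun hj => h _ hj rfl)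
      simp [this]
  · intro j
    rw [Fintype.sum_option]
    show (if ∀ q ∈ S, q.2 ≠ j then (1:ℝ) else 0) + ∑ i, (if (i, j) ∈ S then (1:ℝ) else 0) = 1
    by_cases h : ∃ q ∈ S, q.2 = j
    · obtain ⟨q, hq, hq2⟩ := h
      have : ∀ i, ((i, j) ∈ S ↔ i = q.1) := by
        intro i
        constructor
        · intro hj
          have := hS.2 _ hj _ hq (by simp [hq2])
          rw [← this]
        · rintro rfl; rw [show (q.1, j) = q by rw [← hq2]]; exact hq
      simp only [this]
      rw [if_neg (by push_neg; exact ⟨q, hq, hq2⟩)]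
      simp
    · push_neg at h
      rw [if_pos (fun q hq => h q hq)]
      have : ∀ i, ((i, j) ∈ S ↔ False) := fun i => iff_false_intro (fun hj => h _ hj rfl)
      simp [this]

lemma matchCoupling_cost {N M : ℕ} (p : ℝ) (D : Fin N → ℝ × ℝ) (D' : Fin M → ℝ × ℝ)
    (S : Finset (Fin N × Fin M)) :
    (∑ a : Option (Fin N), ∑ b : Option (Fin M),
        pdCost p D D' a b * matchCoupling S a b) = matchCost p D D' S := by
  rw [Fintype.sum_option]
  simp only [Fintype.sum_option]
  show (pdCost p D D' none none * 0 + ∑ j, pdCost p D D' none (some j) *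
      (if ∀ q ∈ S, q.2 ≠ j then (1:ℝ) else 0)) +
    ∑ i, (pdCost p D D' (some i) none * (if ∀ q ∈ S, q.1 ≠ i then (1:ℝ) else 0) +
      ∑ j, pdCost p D D' (some i) (some j) * (if (i, j) ∈ S then (1:ℝ) else 0)) = _
  rw [matchCost]
  have h1 : ∀ j : Fin M, pdCost p D D' none (some j) = lpp p (D' j) (diagProj (D' j)) := by
    intro j; exact lpp_comm p _ _
  simp only [h1, mul_ite, mul_one, mul_zero, Finset.sum_add_distrib]
  rw [← Finset.sum_filter, ← Finset.sum_filter]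
  have h2 : ∑ i, ∑ j, (if (i, j) ∈ S then pdCost p D D' (some i) (some j) else 0)
      = ∑ q ∈ S, lpp p (D q.1) (D' q.2) := by
    rw [← Fintype.sum_prod_type (f := fun q : Fin N × Fin M =>
      if q ∈ S then pdCost p D D' (some q.1) (some q.2) else 0)]
    rw [Finset.sum_ite_mem]
    simp [pdCost]
  rw [h2]
  simp only [pdCost]
  ring

noncomputable def costM {N M : ℕ} (p : ℝ) (D : Fin N → ℝ × ℝ) (D' : Fin M → ℝ × ℝ) :
    Matrix (Fin N ⊕ Fin M) (Fin N ⊕ Fin M) ℝ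
  | Sum.inl i, Sum.inl _ => lpp p (D i) (diagProj (D i))
  | Sum.inl i, Sum.inr j => lpp p (D i) (D' j)
  | Sum.inr _, Sum.inl _ => 0
  | Sum.inr _, Sum.inr j => lpp p (D' j) (diagProj (D' j))

noncomputable def bigA {N M : ℕ} (π : Option (Fin N) → Option (Fin M) → ℝ) :
    Matrix (Fin N ⊕ Fin M) (Fin N ⊕ Fin M) ℝ
  | Sum.inl i, Sum.inl i' => if i = i' then π (some i) none else 0
  | Sum.inl i, Sum.inr j => π (some i) (some j)
  | Sum.inr j, Sum.inl i => (∑ i', π (some i') (some j)) * (∑ j', π (some i) (some j')) /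
      (∑ i', ∑ j', π (some i') (some j'))
  | Sum.inr j, Sum.inr j' => if j = j' then π none (some j) else 0

lemma bigA_mem {N M : ℕ} {π : Option (Fin N) → Option (Fin M) → ℝ}
    (hπ : IsAdmissible π) : bigA π ∈ doublyStochastic ℝ (Fin N ⊕ Fin M) := by
  obtain ⟨hpos, hrow, hcol, h00⟩ := hπ
  set Sm := ∑ i', ∑ j', π (some i') (some j') with hSm
  have hSnn : 0 ≤ Sm := Finset.sum_nonneg fun i _ => Finset.sum_nonneg fun j _ => hpos _ _
  have hc : ∀ i, π (some i) none + ∑ j, π (some i) (some j) = 1 := by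
    intro i; have := hrow i; rwa [Fintype.sum_option] at this
  have hr : ∀ j, π none (some j) + ∑ i, π (some i) (some j) = 1 := by
    intro j; have := hcol j; rwa [Fintype.sum_option] at this
  have hrS : ∑ j, ∑ i, π (some i) (some j) = Sm := by rw [hSm, Finset.sum_comm]
  have hzero : Sm = 0 → ∀ i j, π (some i) (some j) = 0 := by
    intro h i j
    have h1 := (Finset.sum_eq_zero_iff_of_nonneg (fun i _ => Finset.sum_nonneg
      fun j _ => hpos (some i) (some j))).1 (hSm ▸ h) i (mem_univ i)
    exact (Finset.sum_eq_zero_iff_of_nonneg (fun j _ => hpos _ _)).1 h1 j (mem_univ j)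
  rw [mem_doublyStochastic_iff_sum]
  refine ⟨?_, ?_, ?_⟩
  · rintro (i|j) (i'|j')
    · dsimp [bigA]; split <;> [exact hpos _ _; exact le_rfl]
    · exact hpos _ _
    · exact div_nonneg (mul_nonneg (Finset.sum_nonneg fun _ _ => hpos _ _)
        (Finset.sum_nonneg fun _ _ => hpos _ _)) hSnn
    · dsimp [bigA]; split <;> [exact hpos _ _; exact le_rfl]
  · rintro (i|j)
    · rw [Fintype.sum_sum_type]
      show (∑ i', if i = i' then π (some i) none else 0) + ∑ j, π (some i) (some j) = 1
      rw [Finset.sum_ite_eq (univ : Finset (Fin N)) i (fun _ => π (some i) none)]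
      simpa using hc i
    · rw [Fintype.sum_sum_type]
      show (∑ i, (∑ i', π (some i') (some j)) * (∑ j', π (some i) (some j')) / Sm)
          + ∑ j', (if j = j' then π none (some j) else 0) = 1
      rw [Finset.sum_ite_eq (univ : Finset (Fin M)) j (fun _ => π none (some j))]
      simp only [mem_univ, if_pos]
      by_cases hS : Sm = 0
      · have : ∀ i, (∑ i', π (some i') (some j)) * (∑ j', π (some i) (some j')) / Sm = 0 := by
          intro i; simp [hzero hS, Finset.sum_eq_zero fun i' _ => hzero hS i' j]
        rw [Finset.sum_congr rfl fun i _ => this i]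
        have : ∑ i, π (some i) (some j) = 0 := Finset.sum_eq_zero fun i _ => hzero hS i j
        have := hr j
        rw [‹∑ i, π (some i) (some j) = 0›] at this
        simpa using this
      · have : ∑ i, (∑ i', π (some i') (some j)) * (∑ j', π (some i) (some j')) / Sm
            = ∑ i', π (some i') (some j) := by
          rw [← Finset.sum_div, ← Finset.mul_sum, ← hSm, mul_div_assoc, div_self hS, mul_one]
        rw [this]
        linarith [hr j]
  · rintro (i|j)
    · rw [Fintype.sum_sum_type]
      show (∑ i', if i' = i then π (some i') none else 0)
          + ∑ j, (∑ i', π (some i') (some j)) * (∑ j', π (some i) (some j')) / Sm = 1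
      rw [Finset.sum_ite_eq' (univ : Finset (Fin N)) i (fun i' => π (some i') none)]
      simp only [mem_univ, if_pos]
      by_cases hS : Sm = 0
      · have h2 : ∀ j, (∑ i', π (some i') (some j)) * (∑ j', π (some i) (some j')) / Sm = 0 := by
          intro j; simp [Finset.sum_eq_zero fun i' _ => hzero hS i' j]
        rw [Finset.sum_congr rfl fun j _ => h2 j]
        have h3 : ∑ j, π (some i) (some j) = 0 := Finset.sum_eq_zero fun j _ => hzero hS i j
        have := hc i
        rw [h3] at this
        simpa using this
      · have : ∑ j, (∑ i', π (some i') (some j)) * (∑ j', π (some i) (some j')) / Sm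
            = ∑ j', π (some i) (some j') := by
          rw [← Finset.sum_div]
          conv_lhs => rw [← Finset.sum_mul, hrS]
          rw [mul_comm, mul_div_assoc, div_self hS, mul_one]
        rw [this]
        linarith [hc i]
    · rw [Fintype.sum_sum_type]
      show (∑ i, π (some i) (some j)) + ∑ j', (if j' = j then π none (some j') else 0) = 1
      rw [Finset.sum_ite_eq' (univ : Finset (Fin M)) j (fun j' => π none (some j'))]
      simp only [mem_univ, if_pos]
      linarith [hr j]

lemma bigA_cost {N M : ℕ} (p : ℝ) (D : Fin N → ℝ × ℝ) (D' : Fin M → ℝ × ℝ)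
    {π : Option (Fin N) → Option (Fin M) → ℝ} (hπ : IsAdmissible π) :
    ∑ a : Fin N ⊕ Fin M, ∑ b : Fin N ⊕ Fin M, costM p D D' a b * bigA π a b
      = ∑ a : Option (Fin N), ∑ b : Option (Fin M), pdCost p D D' a b * π a b := by
  obtain ⟨hpos, hrow, hcol, h00⟩ := hπ
  have lhs : ∑ a : Fin N ⊕ Fin M, ∑ b : Fin N ⊕ Fin M, costM p D D' a b * bigA π a b
      = (∑ i, (lpp p (D i) (diagProj (D i)) * π (some i) none
          + ∑ j, lpp p (D i) (D' j) * π (some i) (some j)))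
        + ∑ j, lpp p (D' j) (diagProj (D' j)) * π none (some j) := by
    rw [Fintype.sum_sum_type]
    congr 1
    · refine Finset.sum_congr rfl fun i _ => ?_
      rw [Fintype.sum_sum_type]
      congr 1
      show (∑ i', lpp p (D i) (diagProj (D i)) * if i = i' then π (some i) none else 0) = _
      rw [Finset.sum_congr rfl fun i' _ => (mul_ite _ _ _ _).trans (by rw [mul_zero])]
      exact (Finset.sum_ite_eq (univ : Finset (Fin N)) i
        (fun _ => lpp p (D i) (diagProj (D i)) * π (some i) none)).trans (if_pos (mem_univ i))
    · refine Finset.sum_congr rfl fun j _ => ?_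
      rw [Fintype.sum_sum_type]
      have h1 : (∑ i, costM p D D' (Sum.inr j) (Sum.inl i) * bigA π (Sum.inr j) (Sum.inl i))
          = 0 := Finset.sum_eq_zero fun i _ => by show (0:ℝ) * _ = 0; rw [zero_mul]
      rw [h1, zero_add]
      show (∑ j', lpp p (D' j') (diagProj (D' j')) * if j = j' then π none (some j) else 0) = _
      rw [Finset.sum_congr rfl fun j' _ => (mul_ite _ _ _ _).trans (by rw [mul_zero])]
      rw [Finset.sum_ite_eq (univ : Finset (Fin M)) j
        (fun j' => lpp p (D' j') (diagProj (D' j')) * π none (some j))]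
      simp
  have rhs : ∑ a : Option (Fin N), ∑ b : Option (Fin M), pdCost p D D' a b * π a b
      = (∑ i, (lpp p (D i) (diagProj (D i)) * π (some i) none
          + ∑ j, lpp p (D i) (D' j) * π (some i) (some j)))
        + ∑ j, lpp p (D' j) (diagProj (D' j)) * π none (some j) := by
    rw [Fintype.sum_option]
    rw [Fintype.sum_option]
    show (pdCost p D D' none none * π none none + ∑ j, pdCost p D D' none (some j) * π none (some j))
        + ∑ i, (∑ b, pdCost p D D' (some i) b * π (some i) b) = _
    rw [h00, mul_zero, zero_add]
    rw [Finset.sum_congr rfl fun j _ => by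
      rw [show pdCost p D D' none (some j) = lpp p (D' j) (diagProj (D' j)) from lpp_comm p _ _]]
    rw [add_comm]
    congr 1
    refine Finset.sum_congr rfl fun i _ => ?_
    rw [Fintype.sum_option]
    rfl
  rw [lhs, rhs]

lemma perm_cost {n : Type*} [Fintype n] [DecidableEq n] (C : Matrix n n ℝ) (σ : Equiv.Perm n) :
    ∑ a, ∑ b, C a b * (σ.permMatrix ℝ) a b = ∑ a, C a (σ a) := by
  refine Finset.sum_congr rfl fun a _ => ?_
  simp [Equiv.Perm.permMatrix, PEquiv.toMatrix_apply, Equiv.toPEquiv_apply, mul_ite,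
    Finset.sum_ite_eq]

lemma exists_perm_le {n : Type*} [Fintype n] [DecidableEq n] (C : Matrix n n ℝ)
    {A : Matrix n n ℝ} (hA : A ∈ doublyStochastic ℝ n) :
    ∃ σ : Equiv.Perm n, ∑ a, C a (σ a) ≤ ∑ a, ∑ b, C a b * A a b := by
  obtain ⟨w, hw0, hw1, hwA⟩ := exists_eq_sum_perm_of_mem_doublyStochastic hA
  have key : ∑ a, ∑ b, C a b * A a b = ∑ σ : Equiv.Perm n, w σ * ∑ a, C a (σ a) := by
    rw [← hwA]
    have : ∀ a b, C a b * (∑ σ : Equiv.Perm n, w σ • σ.permMatrix ℝ) a b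
        = ∑ σ : Equiv.Perm n, w σ * (C a b * (σ.permMatrix ℝ) a b) := by
      intro a b
      rw [Matrix.sum_apply, Finset.mul_sum]
      refine Finset.sum_congr rfl fun σ _ => ?_
      simp [Matrix.smul_apply]
      ring
    rw [Finset.sum_congr rfl fun a _ => Finset.sum_congr rfl fun b _ => this a b]
    calc ∑ a : n, ∑ b : n, ∑ σ : Equiv.Perm n, w σ * (C a b * (σ.permMatrix ℝ) a b)
        = ∑ a : n, ∑ σ : Equiv.Perm n, ∑ b : n, w σ * (C a b * (σ.permMatrix ℝ) a b) :=
          Finset.sum_congr rfl fun a _ => Finset.sum_comm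
      _ = ∑ σ : Equiv.Perm n, ∑ a : n, ∑ b : n, w σ * (C a b * (σ.permMatrix ℝ) a b) :=
          Finset.sum_comm
      _ = ∑ σ : Equiv.Perm n, w σ * ∑ a, C a (σ a) := by
          refine Finset.sum_congr rfl fun σ _ => ?_
          rw [← perm_cost C σ, Finset.mul_sum]
          exact Finset.sum_congr rfl fun a _ => (Finset.mul_sum _ _ _).symm
  obtain ⟨σ0, -, hσ0⟩ := Finset.exists_min_image (univ : Finset (Equiv.Perm n))
    (fun σ => ∑ a, C a (σ a)) ⟨1, mem_univ 1⟩
  refine ⟨σ0, ?_⟩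
  rw [key]
  calc ∑ a, C a (σ0 a) = ∑ σ : Equiv.Perm n, w σ * ∑ a, C a (σ0 a) := by
        rw [← Finset.sum_mul, hw1, one_mul]
    _ ≤ ∑ σ : Equiv.Perm n, w σ * ∑ a, C a (σ a) :=
        Finset.sum_le_sum fun σ _ => mul_le_mul_of_nonneg_left (hσ0 σ (mem_univ σ)) (hw0 σ)

lemma perm_matchCost {N M : ℕ} (p : ℝ) (D : Fin N → ℝ × ℝ) (D' : Fin M → ℝ × ℝ)
    (σ : Equiv.Perm (Fin N ⊕ Fin M)) :
    ∃ S : Finset (Fin N × Fin M), IsPartialMatching S ∧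
      matchCost p D D' S = ∑ a, costM p D D' a (σ a) := by
  set S : Finset (Fin N × Fin M) :=
    univ.filter (fun q : Fin N × Fin M => σ (Sum.inl q.1) = Sum.inr q.2) with hSdef
  have hmemS : ∀ q : Fin N × Fin M, q ∈ S ↔ σ (Sum.inl q.1) = Sum.inr q.2 := by
    intro q; simp [hSdef]
  refine ⟨S, ⟨?_, ?_⟩, ?_⟩
  · intro q hq q' hq' h1
    rw [hmemS] at hq hq'
    have : (Sum.inr q.2 : Fin N ⊕ Fin M) = Sum.inr q'.2 := by rw [← hq, ← hq', h1]
    exact Prod.ext h1 (Sum.inr.inj this)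
  · intro q hq q' hq' h2
    rw [hmemS] at hq hq'
    have : (Sum.inl q.1 : Fin N ⊕ Fin M) = Sum.inl q'.1 := σ.injective (by rw [hq, hq', h2])
    exact Prod.ext (Sum.inl.inj this) h2
  · rw [Fintype.sum_sum_type, matchCost]
    have claimA : ∀ i : Fin N,
        (∑ j, if σ (Sum.inl i) = Sum.inr j then lpp p (D i) (D' j) else 0)
        + (if ∀ q ∈ S, q.1 ≠ i then lpp p (D i) (diagProj (D i)) else 0)
        = costM p D D' (Sum.inl i) (σ (Sum.inl i)) := by
      intro i
      rcases h : σ (Sum.inl i) with i' | j0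
      · rw [Finset.sum_eq_zero fun (j : Fin M) _ => if_neg (by simp), zero_add,
          if_pos (fun q hq hqi => by
            rw [hmemS] at hq; rw [hqi, h] at hq; exact Sum.inl_ne_inr hq)]
        rfl
      · have heval : (∑ j, if (Sum.inr j0 : Fin N ⊕ Fin M) = Sum.inr j
            then lpp p (D i) (D' j) else 0) = lpp p (D i) (D' j0) := by
          simp
        rw [heval, if_neg (by
          push_neg
          exact ⟨(i, j0), (hmemS (i, j0)).2 h, rfl⟩), add_zero]
        rfl
    have claimB :
        (∑ j ∈ univ.filter (fun j : Fin M => ∀ q ∈ S, q.2 ≠ j),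
          lpp p (D' j) (diagProj (D' j)))
        = ∑ j, costM p D D' (Sum.inr j) (σ (Sum.inr j)) := by
      set g : Fin N ⊕ Fin M → ℝ := fun c =>
        Sum.casesOn c (fun _ => 0) (fun j => lpp p (D' j) (diagProj (D' j))) with hg
      set h : Fin N ⊕ Fin M → ℝ := fun c =>
        if ∀ i : Fin N, σ (Sum.inl i) ≠ c then g c else 0 with hh
      have hcost : ∀ (j : Fin M) (c : Fin N ⊕ Fin M), costM p D D' (Sum.inr j) c = g c := by
        intro j c; rcases c with i | j' <;> rfl
      have step1 : (∑ j ∈ univ.filter (fun j : Fin M => ∀ q ∈ S, q.2 ≠ j),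
          lpp p (D' j) (diagProj (D' j))) = ∑ c : Fin N ⊕ Fin M, h c := by
        rw [Fintype.sum_sum_type]
        have h1 : ∀ i : Fin N, h (Sum.inl i) = 0 := fun i => by
          show (if ∀ i' : Fin N, σ (Sum.inl i') ≠ Sum.inl i then g (Sum.inl i) else 0) = 0
          split <;> rfl
        rw [Finset.sum_eq_zero fun i _ => h1 i, zero_add, Finset.sum_filter]
        refine Finset.sum_congr rfl fun j _ => ?_
        have hiff : (∀ q ∈ S, q.2 ≠ j) ↔ (∀ i : Fin N, σ (Sum.inl i) ≠ Sum.inr j) := by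
          constructor
          · intro hq i hi
            exact hq (i, j) ((hmemS (i, j)).2 hi) rfl
          · intro hi q hq hqj
            rw [hmemS] at hq
            exact hi q.1 (by rw [hq, hqj])
        show _ = if ∀ i : Fin N, σ (Sum.inl i) ≠ Sum.inr j then g (Sum.inr j) else 0
        by_cases hc : ∀ i : Fin N, σ (Sum.inl i) ≠ Sum.inr j
        · rw [if_pos (hiff.2 hc)]
          exact (if_pos hc).symm
        · rw [if_neg (fun hx => hc (hiff.1 hx))]
          exact (if_neg hc).symm
      have step2 : ∑ c : Fin N ⊕ Fin M, h c = ∑ a : Fin N ⊕ Fin M, h (σ a) :=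
        (Equiv.sum_comp σ h).symm
      have step3 : ∑ a : Fin N ⊕ Fin M, h (σ a)
          = ∑ j, costM p D D' (Sum.inr j) (σ (Sum.inr j)) := by
        rw [Fintype.sum_sum_type]
        have h1 : ∀ i : Fin N, h (σ (Sum.inl i)) = 0 := fun i => by
          show (if ∀ i' : Fin N, σ (Sum.inl i') ≠ σ (Sum.inl i)
            then g (σ (Sum.inl i)) else 0) = 0
          rw [if_neg (by push_neg; exact ⟨i, rfl⟩)]
        have h2 : ∀ j : Fin M, h (σ (Sum.inr j)) = costM p D D' (Sum.inr j) (σ (Sum.inr j)) := by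
          intro j
          rw [hcost j]
          show (if ∀ i : Fin N, σ (Sum.inl i) ≠ σ (Sum.inr j)
            then g (σ (Sum.inr j)) else 0) = g (σ (Sum.inr j))
          exact if_pos (fun i hi => Sum.inl_ne_inr (σ.injective hi))
        rw [Finset.sum_eq_zero fun i _ => h1 i, zero_add]
        exact Finset.sum_congr rfl fun j _ => h2 j
      rw [step1, step2, step3]
    have sumS : (∑ q ∈ S, lpp p (D q.1) (D' q.2))
        = ∑ i, ∑ j, if σ (Sum.inl i) = Sum.inr j then lpp p (D i) (D' j) else 0 := by
      rw [hSdef, Finset.sum_filter]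
      rw [← Fintype.sum_prod_type (f := fun q : Fin N × Fin M =>
        if σ (Sum.inl q.1) = Sum.inr q.2 then lpp p (D q.1) (D' q.2) else 0)]
    rw [sumS, claimB, Finset.sum_filter, ← Finset.sum_add_distrib,
      Finset.sum_congr rfl fun i _ => claimA i]

lemma pdCost_nonneg {N M : ℕ} (p : ℝ) (D : Fin N → ℝ × ℝ) (D' : Fin M → ℝ × ℝ)
    (a : Option (Fin N)) (b : Option (Fin M)) : 0 ≤ pdCost p D D' a b := by
  have h : ∀ x y : ℝ × ℝ, 0 ≤ lpp p x y := fun x y =>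
    add_nonneg (Real.rpow_nonneg (abs_nonneg _) _) (Real.rpow_nonneg (abs_nonneg _) _)
  rcases a with _|i <;> rcases b with _|j <;> first | exact le_rfl | exact h _ _

lemma matchCost_nonneg {N M : ℕ} (p : ℝ) (D : Fin N → ℝ × ℝ) (D' : Fin M → ℝ × ℝ)
    (S : Finset (Fin N × Fin M)) : 0 ≤ matchCost p D D' S := by
  have h : ∀ x y : ℝ × ℝ, 0 ≤ lpp p x y := fun x y =>
    add_nonneg (Real.rpow_nonneg (abs_nonneg _) _) (Real.rpow_nonneg (abs_nonneg _) _)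
  exact add_nonneg (add_nonneg (Finset.sum_nonneg fun q _ => h _ _)
    (Finset.sum_nonneg fun i _ => h _ _)) (Finset.sum_nonneg fun j _ => h _ _)

/-- For finite persistence diagrams, the combinatorial `p`-Wasserstein distance via partial
matchings equals the measure-theoretic `p`-Wasserstein distance between the associated
measure persistence diagrams via admissible couplings. -/
theorem stmt_17 {N M : ℕ} (p : ℝ) (hp : 1 ≤ p)
    (D : Fin N → ℝ × ℝ) (D' : Fin M → ℝ × ℝ)
    (hD : ∀ i, 0 < (D i).1 ∧ (D i).1 < (D i).2)
    (hD' : ∀ j, 0 < (D' j).1 ∧ (D' j).1 < (D' j).2) :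
    dPD p D D' = dMPD p D D' := by
  have hmatch_empty : IsPartialMatching (∅ : Finset (Fin N × Fin M)) :=
    ⟨fun q hq => absurd hq (Finset.notMem_empty q),
     fun q hq => absurd hq (Finset.notMem_empty q)⟩
  set B : Set ℝ := {r | ∃ S : Finset (Fin N × Fin M), IsPartialMatching S ∧
    r = (matchCost p D D' S) ^ (1 / p)} with hB
  set A : Set ℝ := {r | ∃ π : Option (Fin N) → Option (Fin M) → ℝ, IsAdmissible π ∧
    r = (∑ a : Option (Fin N), ∑ b : Option (Fin M), pdCost p D D' a b * π a b) ^ (1 / p)}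
    with hA
  have hBne : B.Nonempty := ⟨(matchCost p D D' ∅) ^ (1 / p), ∅, hmatch_empty, rfl⟩
  have hAne : A.Nonempty := ⟨(matchCost p D D' ∅) ^ (1 / p),
    matchCoupling ∅, matchCoupling_admissible hmatch_empty,
    by rw [matchCoupling_cost]⟩
  have hBbdd : BddBelow B := by
    refine ⟨0, fun r hr => ?_⟩
    obtain ⟨S, _, rfl⟩ := hr
    exact Real.rpow_nonneg (matchCost_nonneg p D D' S) _
  have hAbdd : BddBelow A := by
    refine ⟨0, fun r hr => ?_⟩
    obtain ⟨π, hπ, rfl⟩ := hr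
    exact Real.rpow_nonneg (Finset.sum_nonneg fun a _ => Finset.sum_nonneg fun b _ =>
      mul_nonneg (pdCost_nonneg p D D' a b) (hπ.1 a b)) _
  have hp0 : (0:ℝ) ≤ 1 / p := by positivity
  rw [dPD, dMPD, ← hA, ← hB]
  apply le_antisymm
  · refine le_csInf hAne ?_
    rintro r ⟨π, hπ, rfl⟩
    obtain ⟨σ, hσ⟩ := exists_perm_le (costM p D D') (bigA_mem hπ)
    obtain ⟨S, hS, hSc⟩ := perm_matchCost p D D' σ
    have hle : matchCost p D D' S ≤
        ∑ a : Option (Fin N), ∑ b : Option (Fin M), pdCost p D D' a b * π a b := by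
      rw [hSc, ← bigA_cost p D D' hπ]
      exact hσ
    calc sInf B ≤ (matchCost p D D' S) ^ (1 / p) := csInf_le hBbdd ⟨S, hS, rfl⟩
      _ ≤ _ := Real.rpow_le_rpow (matchCost_nonneg p D D' S) hle hp0
  · refine le_csInf hBne ?_
    rintro r ⟨S, hS, rfl⟩
    exact csInf_le hAbdd ⟨matchCoupling S, matchCoupling_admissible hS,
      by rw [matchCoupling_cost]⟩
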